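/- Let Λ be a k-graph with exactly p connected components (p finite or countably infinite). Then H₀(Λ) ≅ ℤ^p. In particular Λ is connected if and only if H₀(Λ) ≅ ℤ. -/

import Mathlib

namespace KGH

/-- A `k`-graph: a (small, nonempty) category with a degree functor `d : Λ → ℕ^k`
satisfying the unique factorisation property.  Composition `comp f g` is the paper's
`f g`, defined when `s(f) = r(g)`, i.e. `dom f = cod g`. -/
structure KGraph (k : ℕ) where
  Obj : Type
  Mor : Type
  dom : Mor → Obj
  cod : Mor → Obj
  idm : Obj → Mor
  comp : Mor → Mor → Mor
  d : Mor → Fin k → ℕ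
  nonempty : Nonempty Obj
  dom_idm : ∀ o, dom (idm o) = o
  cod_idm : ∀ o, cod (idm o) = o
  d_idm : ∀ o, d (idm o) = 0
  dom_comp : ∀ f g, dom f = cod g → dom (comp f g) = dom g
  cod_comp : ∀ f g, dom f = cod g → cod (comp f g) = cod f
  d_comp : ∀ f g, dom f = cod g → d (comp f g) = d f + d g
  idm_comp : ∀ f, comp (idm (cod f)) f = f
  comp_idm : ∀ f, comp f (idm (dom f)) = f
  comp_assoc : ∀ f g h, dom f = cod g → dom g = cod h →
      comp (comp f g) h = comp f (comp g h)
  factor : ∀ f (m n : Fin k → ℕ), d f = m + n →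
      ∃! p : Mor × Mor, dom p.1 = cod p.2 ∧ d p.1 = m ∧ d p.2 = n ∧ comp p.1 p.2 = f

namespace KGraph

variable {k : ℕ}

/-- the total degree `|λ|` of a morphism. -/
def deg (Λ : KGraph k) (f : Λ.Mor) : ℕ := ∑ i, Λ.d f i

/-- split `f` as `f = p.1 p.2` with `d p.1 = m` (junk value if `m ≰ d f`). -/
noncomputable def splitAt (Λ : KGraph k) (f : Λ.Mor) (m : Fin k → ℕ) : Λ.Mor × Λ.Mor :=
  if h : Λ.d f = m + (Λ.d f - m) then Classical.choose (Λ.factor f m (Λ.d f - m) h)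
  else (f, f)

/-- the factorisation segment `λ(m,n)`. -/
noncomputable def seg (Λ : KGraph k) (f : Λ.Mor) (m n : Fin k → ℕ) : Λ.Mor :=
  (Λ.splitAt (Λ.splitAt f m).2 (n - m)).1

/-- the (sorted) list of coordinates in which `f` has nonzero degree. -/
noncomputable def suppList (Λ : KGraph k) (f : Λ.Mor) : List (Fin k) :=
  (Finset.univ.filter fun i => Λ.d f i ≠ 0).sort (· ≤ ·)

/-- the face maps `F_j^ℓ` (`j` is 1-based; `ℓ = false` is `F_j^0`, `ℓ = true` is `F_j^1`). -/
noncomputable def face (Λ : KGraph k) (j : ℕ) (ℓ : Bool) (f : Λ.Mor) : Λ.Mor :=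
  match (Λ.suppList f)[j-1]? with
  | none => f
  | some i =>
    if ℓ then Λ.seg f (Pi.single i 1) (Λ.d f)
    else Λ.seg f 0 (Λ.d f - Pi.single i 1)

/-- `Q_r(Λ)`, the set of `r`-cubes: morphisms of degree `≤ 1_k` with `|d λ| = r`. -/
def QSet (Λ : KGraph k) (r : ℕ) : Set Λ.Mor :=
  {f | (∀ i, Λ.d f i ≤ 1) ∧ Λ.deg f = r}

/-- the (total) group of chains. -/
abbrev Chain (Λ : KGraph k) : Type := Λ.Mor →₀ ℤ

/-- the boundary of a generator: `∂ λ = Σ_{ℓ,i} (-1)^{i+ℓ} F_i^ℓ(λ)`. -/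
noncomputable def bdFun (Λ : KGraph k) (f : Λ.Mor) : Λ.Chain :=
  ∑ j ∈ Finset.range (Λ.deg f),
    ((-1 : ℤ) ^ (j + 1) • Finsupp.single (Λ.face (j+1) false f) (1 : ℤ)
      + (-1 : ℤ) ^ j • Finsupp.single (Λ.face (j+1) true f) (1 : ℤ))

/-- the boundary map `∂` on chains. -/
noncomputable def bd (Λ : KGraph k) : Λ.Chain →ₗ[ℤ] Λ.Chain :=
  Finsupp.lift Λ.Chain ℤ Λ.Mor Λ.bdFun

/-- `C_r(Λ) = ℤ Q_r(Λ)`, as the submodule of chains supported on `Q_r(Λ)`. -/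
noncomputable def CS (Λ : KGraph k) (r : ℕ) : Submodule ℤ Λ.Chain :=
  Finsupp.supported ℤ ℤ (Λ.QSet r)

/-- the `r`-cycles `ker ∂_r`. -/
noncomputable def cycles (Λ : KGraph k) (r : ℕ) : Submodule ℤ Λ.Chain :=
  Λ.CS r ⊓ LinearMap.ker Λ.bd

/-- the `r`-boundaries `im ∂_{r+1}`. -/
noncomputable def bdries (Λ : KGraph k) (r : ℕ) : Submodule ℤ Λ.Chain :=
  (Λ.CS (r+1)).map Λ.bd

/-- the homology `H_r(Λ) = ker ∂_r / im ∂_{r+1}`. -/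
noncomputable abbrev H (Λ : KGraph k) (r : ℕ) :=
  Λ.cycles r ⧸ ((Λ.bdries r).comap (Λ.cycles r).subtype)

/-- the relation `{(r(λ), s(λ))}` on vertices. -/
def rel (Λ : KGraph k) : Λ.Obj → Λ.Obj → Prop :=
  fun u v => ∃ f : Λ.Mor, Λ.cod f = u ∧ Λ.dom f = v

/-- connectedness: the equivalence relation generated by `rel` is total. -/
def Connected (Λ : KGraph k) : Prop :=
  ∀ u v : Λ.Obj, Relation.EqvGen Λ.rel u v

/-- the setoid of connected components. -/
def compSetoid (Λ : KGraph k) : Setoid Λ.Obj :=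
  ⟨Relation.EqvGen Λ.rel, Relation.EqvGen.is_equivalence _⟩

/-- `s(f, m)` for an orientation `m ∈ {1, -1}`. -/
def sV (Λ : KGraph k) (f : Λ.Mor) (m : ℤ) : Λ.Obj :=
  if m = 1 then Λ.dom f else Λ.cod f

/-- `r(f, m) = s(f, -m)`. -/
def rV (Λ : KGraph k) (f : Λ.Mor) (m : ℤ) : Λ.Obj := Λ.sV f (-m)

/-- an undirected path: a sequence of edges with orientations whose endpoints match. -/
def IsUPath (Λ : KGraph k) (n : ℕ) (g : Fin n → Λ.Mor) (m : Fin n → ℤ) : Prop :=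
  (∀ i, g i ∈ Λ.QSet 1) ∧ (∀ i, m i = 1 ∨ m i = -1) ∧
  ∀ (i : ℕ) (h : i + 1 < n),
    Λ.sV (g ⟨i, Nat.lt_of_succ_lt h⟩) (m ⟨i, Nat.lt_of_succ_lt h⟩) =
    Λ.rV (g ⟨i+1, h⟩) (m ⟨i+1, h⟩)

/-- the source of an undirected path. -/
def pathSrc (Λ : KGraph k) {n : ℕ} (g : Fin (n+1) → Λ.Mor) (m : Fin (n+1) → ℤ) : Λ.Obj :=
  Λ.sV (g (Fin.last n)) (m (Fin.last n))

/-- the range of an undirected path. -/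
def pathRng (Λ : KGraph k) {n : ℕ} (g : Fin (n+1) → Λ.Mor) (m : Fin (n+1) → ℤ) : Λ.Obj :=
  Λ.rV (g 0) (m 0)

/-- the trail `Σᵢ mᵢ gᵢ` of an undirected path. -/
noncomputable def trailOf (Λ : KGraph k) {n : ℕ} (g : Fin n → Λ.Mor) (m : Fin n → ℤ) :
    Λ.Chain :=
  ∑ i, m i • Finsupp.single (g i) (1 : ℤ)

/-- `h` is a simple closed trail. -/
def IsSimpleClosedTrail (Λ : KGraph k) (h : Λ.Chain) : Prop :=
  ∃ (n : ℕ) (g : Fin (n+1) → Λ.Mor) (m : Fin (n+1) → ℤ),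
    Λ.IsUPath (n+1) g m ∧ Λ.pathSrc g m = Λ.pathRng g m ∧
    Function.Injective (fun i => Λ.sV (g i) (m i)) ∧
    h = Λ.trailOf g m

end KGraph

end KGH

section Aux

open KGH KGraph Finsupp

namespace KGH.KGraph

variable {k : ℕ} (Λ : KGraph k)

lemma splitAt_spec (f : Λ.Mor) (m : Fin k → ℕ) (h : Λ.d f = m + (Λ.d f - m)) :
    Λ.dom (Λ.splitAt f m).1 = Λ.cod (Λ.splitAt f m).2 ∧ Λ.d (Λ.splitAt f m).1 = m ∧
      Λ.d (Λ.splitAt f m).2 = Λ.d f - m ∧ Λ.comp (Λ.splitAt f m).1 (Λ.splitAt f m).2 = f := by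
  rw [splitAt, dif_pos h]
  exact (Classical.choose_spec (Λ.factor f m (Λ.d f - m) h)).1

lemma splitAt_eq (f : Λ.Mor) (m : Fin k → ℕ) (h : Λ.d f = m + (Λ.d f - m))
    (p : Λ.Mor × Λ.Mor)
    (hp : Λ.dom p.1 = Λ.cod p.2 ∧ Λ.d p.1 = m ∧ Λ.d p.2 = Λ.d f - m ∧ Λ.comp p.1 p.2 = f) :
    Λ.splitAt f m = p := by
  rw [splitAt, dif_pos h]
  exact ((Classical.choose_spec (Λ.factor f m (Λ.d f - m) h)).2 p hp).symm

lemma splitAt_self (f : Λ.Mor) : Λ.splitAt f (Λ.d f) = (f, Λ.idm (Λ.dom f)) := by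
  refine Λ.splitAt_eq f (Λ.d f) (by simp) _ ?_
  refine ⟨(Λ.cod_idm _).symm, rfl, by simp [Λ.d_idm], Λ.comp_idm f⟩

lemma splitAt_zero (f : Λ.Mor) : Λ.splitAt f 0 = (Λ.idm (Λ.cod f), f) := by
  refine Λ.splitAt_eq f 0 (by simp) _ ?_
  refine ⟨Λ.dom_idm _, by simp [Λ.d_idm], by simp, Λ.idm_comp f⟩

lemma seg_top (f : Λ.Mor) : Λ.seg f (Λ.d f) (Λ.d f) = Λ.idm (Λ.dom f) := by
  rw [seg, Λ.splitAt_self f]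
  simp only [tsub_self]
  rw [Λ.splitAt_zero, Λ.cod_idm]

lemma seg_bot (f : Λ.Mor) : Λ.seg f 0 0 = Λ.idm (Λ.cod f) := by
  rw [seg, Λ.splitAt_zero]
  simp only [tsub_self]
  rw [Λ.splitAt_zero]

lemma eq_idm_of_d_eq_zero (f : Λ.Mor) (h : Λ.d f = 0) :
    f = Λ.idm (Λ.cod f) ∧ Λ.dom f = Λ.cod f := by
  obtain ⟨p, hp, hu⟩ := Λ.factor f 0 0 (by simp [h])
  have h1 : (f, Λ.idm (Λ.dom f)) = p :=
    hu _ ⟨(Λ.cod_idm _).symm, h, by simp [Λ.d_idm], Λ.comp_idm f⟩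
  have h2 : (Λ.idm (Λ.cod f), f) = p :=
    hu _ ⟨Λ.dom_idm _, by simp [Λ.d_idm], h, Λ.idm_comp f⟩
  have h3 : f = Λ.idm (Λ.cod f) := congrArg Prod.fst (h1.trans h2.symm)
  refine ⟨h3, ?_⟩
  conv_lhs => rw [h3]
  rw [Λ.dom_idm]

lemma deg_eq_zero_iff (f : Λ.Mor) : Λ.deg f = 0 ↔ Λ.d f = 0 := by
  constructor
  · intro h
    funext i
    have := Finset.sum_eq_zero_iff.mp h i (Finset.mem_univ i)
    simpa using this
  · intro h
    simp [deg, h]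

lemma d_eq_single_of_mem_QSet1 (f : Λ.Mor) (hf : f ∈ Λ.QSet 1) :
    ∃ i, Λ.d f = Pi.single i 1 := by
  obtain ⟨-, hdeg⟩ := hf
  have hne : ∃ i, Λ.d f i ≠ 0 := by
    by_contra h
    push_neg at h
    simp [deg, Finset.sum_eq_zero fun i _ => h i] at hdeg
  obtain ⟨i, hi⟩ := hne
  have h1 : Λ.d f i ≤ 1 := by
    calc Λ.d f i ≤ ∑ j, Λ.d f j := Finset.single_le_sum (fun j _ => Nat.zero_le _) (Finset.mem_univ i)
    _ = 1 := hdeg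
  have hdi : Λ.d f i = 1 := le_antisymm h1 (Nat.one_le_iff_ne_zero.mpr hi)
  have herase : ∑ j ∈ Finset.univ.erase i, Λ.d f j = 0 := by
    have h2 := Finset.sum_erase_add Finset.univ (Λ.d f) (Finset.mem_univ i)
    have hdeg' : ∑ j, Λ.d f j = 1 := hdeg
    omega
  refine ⟨i, funext fun j => ?_⟩
  by_cases hj : j = i
  · subst hj; simp [hdi]
  · rw [Pi.single_eq_of_ne hj]
    exact Finset.sum_eq_zero_iff.mp herase j (Finset.mem_erase.mpr ⟨hj, Finset.mem_univ j⟩)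

lemma suppList_of_single {f : Λ.Mor} {i : Fin k} (h : Λ.d f = Pi.single i 1) :
    Λ.suppList f = [i] := by
  have : (Finset.univ.filter fun j => Λ.d f j ≠ 0) = {i} := by
    ext j
    simp only [Finset.mem_filter, Finset.mem_univ, true_and, Finset.mem_singleton, h]
    by_cases hj : j = i
    · subst hj; simp
    · simp [Pi.single_eq_of_ne hj, hj]
  rw [suppList, this, Finset.sort_singleton]

lemma face_true_of_QSet1 (f : Λ.Mor) (hf : f ∈ Λ.QSet 1) :
    Λ.face 1 true f = Λ.idm (Λ.dom f) := by
  obtain ⟨i, hi⟩ := Λ.d_eq_single_of_mem_QSet1 f hf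
  have hget : ([i] : List (Fin k))[1-1]? = some i := rfl
  rw [face, Λ.suppList_of_single hi, hget]
  change Λ.seg f (Pi.single i 1) (Λ.d f) = _
  rw [← hi, Λ.seg_top]

lemma face_false_of_QSet1 (f : Λ.Mor) (hf : f ∈ Λ.QSet 1) :
    Λ.face 1 false f = Λ.idm (Λ.cod f) := by
  obtain ⟨i, hi⟩ := Λ.d_eq_single_of_mem_QSet1 f hf
  have hget : ([i] : List (Fin k))[1-1]? = some i := rfl
  rw [face, Λ.suppList_of_single hi, hget]
  change Λ.seg f 0 (Λ.d f - Pi.single i 1) = _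
  rw [← hi]
  simp only [tsub_self]
  exact Λ.seg_bot f

lemma bdFun_of_QSet1 (f : Λ.Mor) (hf : f ∈ Λ.QSet 1) :
    Λ.bdFun f = Finsupp.single (Λ.idm (Λ.dom f)) 1 - Finsupp.single (Λ.idm (Λ.cod f)) 1 := by
  rw [bdFun, hf.2, Finset.sum_range_one, Λ.face_true_of_QSet1 f hf, Λ.face_false_of_QSet1 f hf]
  simp only [zero_add, pow_one, pow_zero, neg_smul, one_smul]
  abel

lemma bdFun_of_deg_zero (f : Λ.Mor) (hf : Λ.deg f = 0) : Λ.bdFun f = 0 := by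
  rw [bdFun, hf, Finset.sum_range_zero]

lemma bd_single (f : Λ.Mor) (c : ℤ) : Λ.bd (Finsupp.single f c) = c • Λ.bdFun f := by
  rw [bd, Finsupp.lift_apply, Finsupp.sum_single_index]
  simp

lemma CS_le_ker_bd : Λ.CS 0 ≤ LinearMap.ker Λ.bd := by
  intro x hx
  rw [LinearMap.mem_ker, bd, Finsupp.lift_apply]
  refine Finset.sum_eq_zero fun f hf => ?_
  show x f • Λ.bdFun f = 0
  rw [Λ.bdFun_of_deg_zero f (hx hf).2, smul_zero]

lemma cycles_zero_eq : Λ.cycles 0 = Λ.CS 0 :=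
  le_antisymm inf_le_left (le_inf le_rfl Λ.CS_le_ker_bd)

lemma idm_mem_QSet0 (o : Λ.Obj) : Λ.idm o ∈ Λ.QSet 0 :=
  ⟨fun i => by simp [Λ.d_idm], by simp [deg, Λ.d_idm]⟩

lemma single_idm_mem_cycles (o : Λ.Obj) :
    Finsupp.single (Λ.idm o) (1 : ℤ) ∈ Λ.cycles 0 := by
  rw [Λ.cycles_zero_eq]
  exact Finsupp.single_mem_supported ℤ 1 (Λ.idm_mem_QSet0 o)

lemma diff_mem_bdries (f : Λ.Mor) :
    Finsupp.single (Λ.idm (Λ.dom f)) (1 : ℤ) - Finsupp.single (Λ.idm (Λ.cod f)) 1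
      ∈ Λ.bdries 0 := by
  generalize hn : Λ.deg f = n
  induction n generalizing f with
  | zero =>
    obtain ⟨-, hdc⟩ := Λ.eq_idm_of_d_eq_zero f ((Λ.deg_eq_zero_iff f).mp hn)
    rw [hdc, sub_self]
    exact Submodule.zero_mem _
  | succ n ih =>
    have hne : ∃ i, Λ.d f i ≠ 0 := by
      by_contra h
      push_neg at h
      rw [deg, Finset.sum_eq_zero fun i _ => h i] at hn
      omega
    obtain ⟨i, hi⟩ := hne
    have hsub : Λ.d f = Pi.single i 1 + (Λ.d f - Pi.single i 1) := by
      funext j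
      by_cases hj : j = i
      · subst hj; simp; omega
      · simp [Pi.single_eq_of_ne hj]
    set p := Λ.splitAt f (Pi.single i 1) with hp
    obtain ⟨hdc, hd1, hd2, hcomp⟩ := Λ.splitAt_spec f (Pi.single i 1) hsub
    have hcod : Λ.cod p.1 = Λ.cod f := by rw [← hcomp]; exact (Λ.cod_comp _ _ hdc).symm
    have hdom : Λ.dom p.2 = Λ.dom f := by rw [← hcomp]; exact (Λ.dom_comp _ _ hdc).symm
    have hq1 : p.1 ∈ Λ.QSet 1 := by
      refine ⟨fun j => ?_, ?_⟩
      · rw [hd1]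
        by_cases hj : j = i
        · subst hj; simp
        · simp [Pi.single_eq_of_ne hj]
      · simp [deg, hp, hd1]
    have hdeg2 : Λ.deg p.2 = n := by
      have hd : Λ.d f = Λ.d p.1 + Λ.d p.2 := by
        rw [← hcomp]; exact Λ.d_comp _ _ hdc
      have : Λ.deg f = Λ.deg p.1 + Λ.deg p.2 := by
        rw [deg, hd]; simp [deg, Finset.sum_add_distrib]
      rw [hn, hq1.2] at this
      omega
    have hb1 : Finsupp.single (Λ.idm (Λ.dom p.1)) (1 : ℤ) - Finsupp.single (Λ.idm (Λ.cod p.1)) 1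
        ∈ Λ.bdries 0 := by
      have hmem : Finsupp.single p.1 (1 : ℤ) ∈ Λ.CS 1 :=
        Finsupp.single_mem_supported ℤ 1 hq1
      have := Submodule.mem_map_of_mem (f := Λ.bd) hmem
      rw [Λ.bd_single, one_smul, Λ.bdFun_of_QSet1 p.1 hq1] at this
      exact this
    have hb2 := ih p.2 hdeg2
    have := Submodule.add_mem _ hb2 hb1
    rw [hdom, hdc, hcod] at this
    convert this using 1
    abel

lemma diff_mem_bdries' {u v : Λ.Obj} (h : Relation.EqvGen Λ.rel u v) :
    Finsupp.single (Λ.idm u) (1 : ℤ) - Finsupp.single (Λ.idm v) 1 ∈ Λ.bdries 0 := by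
  induction h with
  | rel u v huv =>
    obtain ⟨f, hc, hd⟩ := huv
    have := Λ.diff_mem_bdries f
    rw [hc, hd] at this
    have := Submodule.neg_mem _ this
    rw [neg_sub] at this
    exact this
  | refl u => rw [sub_self]; exact Submodule.zero_mem _
  | symm u v _ ih =>
    have := Submodule.neg_mem _ ih
    rwa [neg_sub] at this
  | trans u v w _ _ ih1 ih2 =>
    have := Submodule.add_mem _ ih1 ih2
    rwa [sub_add_sub_cancel] at this

/-- the comparison map to the free module on components. -/
noncomputable def compMap : Λ.Chain →ₗ[ℤ] (Quotient Λ.compSetoid →₀ ℤ) :=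
  Finsupp.lift _ ℤ _ (fun f => Finsupp.single (Quotient.mk Λ.compSetoid (Λ.cod f)) 1)

lemma compMap_single (f : Λ.Mor) (c : ℤ) :
    Λ.compMap (Finsupp.single f c) = c • Finsupp.single (Quotient.mk Λ.compSetoid (Λ.cod f)) 1 := by
  rw [compMap, Finsupp.lift_apply, Finsupp.sum_single_index]
  simp

lemma mk_dom_eq_mk_cod (f : Λ.Mor) :
    Quotient.mk Λ.compSetoid (Λ.dom f) = Quotient.mk Λ.compSetoid (Λ.cod f) :=
  Quotient.sound (Relation.EqvGen.symm _ _ (Relation.EqvGen.rel _ _ ⟨f, rfl, rfl⟩))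

lemma bdries_le_ker_compMap : Λ.bdries 0 ≤ LinearMap.ker Λ.compMap := by
  rw [bdries, Submodule.map_le_iff_le_comap, CS, Finsupp.supported_eq_span_single,
    Submodule.span_le]
  rintro x ⟨f, hf, rfl⟩
  simp only [SetLike.mem_coe, Submodule.mem_comap, LinearMap.mem_ker]
  rw [Λ.bd_single, one_smul, Λ.bdFun_of_QSet1 f hf, map_sub, Λ.compMap_single,
    Λ.compMap_single, Λ.cod_idm, Λ.cod_idm, Λ.mk_dom_eq_mk_cod, sub_self]

end KGH.KGraph

end Aux

open KGH KGraph in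
/-- `H₀(Λ)` is free abelian on the set of connected components of
`Λ`; if there are `p` components then `H₀(Λ) ≅ ℤ^p`; and `Λ` is connected iff
`H₀(Λ) ≅ ℤ`. -/
theorem statement7 {k : ℕ} (Λ : KGraph k) :
    Nonempty (Λ.H 0 ≃ₗ[ℤ] (Quotient Λ.compSetoid →₀ ℤ)) ∧
    (∀ p : ℕ, 0 < p → Nat.card (Quotient Λ.compSetoid) = p →
      Nonempty (Λ.H 0 ≃ₗ[ℤ] (Fin p → ℤ))) ∧
    (Λ.Connected ↔ Nonempty (Λ.H 0 ≃ₗ[ℤ] ℤ)) := by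
  classical
  set B := (Λ.bdries 0).comap (Λ.cycles 0).subtype with hB
  let φ : Λ.H 0 →ₗ[ℤ] (Quotient Λ.compSetoid →₀ ℤ) :=
    Submodule.liftQ B (Λ.compMap.comp (Λ.cycles 0).subtype)
      (by rw [LinearMap.ker_comp]; exact Submodule.comap_mono Λ.bdries_le_ker_compMap)
  have hmem : ∀ q : Quotient Λ.compSetoid,
      Finsupp.single (Λ.idm q.out) (1 : ℤ) ∈ Λ.cycles 0 :=
    fun q => Λ.single_idm_mem_cycles _
  let ψ : (Quotient Λ.compSetoid →₀ ℤ) →ₗ[ℤ] Λ.H 0 :=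
    Finsupp.lift _ ℤ _
      (fun q => Submodule.Quotient.mk ⟨Finsupp.single (Λ.idm q.out) 1, hmem q⟩)
  have hψ_single : ∀ q : Quotient Λ.compSetoid,
      ψ (Finsupp.single q 1) =
        Submodule.Quotient.mk ⟨Finsupp.single (Λ.idm q.out) 1, hmem q⟩ := by
    intro q
    show (Finsupp.lift _ ℤ _ _) (Finsupp.single q 1) = _
    rw [Finsupp.lift_apply, Finsupp.sum_single_index (by simp), one_smul]
  have hφ_mk : ∀ x : Λ.cycles 0, φ (Submodule.Quotient.mk x) = Λ.compMap x.1 :=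
    fun x => rfl
  have key : ∀ (x : Λ.Chain) (hx : x ∈ Λ.cycles 0),
      ψ (Λ.compMap x) = Submodule.Quotient.mk ⟨x, hx⟩ := by
    have hspan : ∀ x ∈ Λ.cycles 0, x ∈ Submodule.span ℤ
        ((fun a => Finsupp.single a (1 : ℤ)) '' Λ.QSet 0) := by
      intro x hx
      rw [Λ.cycles_zero_eq, CS, Finsupp.supported_eq_span_single] at hx
      exact hx
    intro x hx
    induction hspan x hx using Submodule.span_induction with
    | mem x hmem' =>
      obtain ⟨a, ha, rfl⟩ := hmem'
      have ha0 : Λ.d a = 0 := (Λ.deg_eq_zero_iff a).mp ha.2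
      obtain ⟨haeq, -⟩ := Λ.eq_idm_of_d_eq_zero a ha0
      rw [Λ.compMap_single, one_smul, hψ_single]
      rw [Submodule.Quotient.eq]
      show _ ∈ (Λ.bdries 0).comap (Λ.cycles 0).subtype
      rw [Submodule.mem_comap]
      have hout : Quotient.mk Λ.compSetoid (Quotient.mk Λ.compSetoid (Λ.cod a)).out
          = Quotient.mk Λ.compSetoid (Λ.cod a) := Quotient.out_eq _
      have hrel : Relation.EqvGen Λ.rel
          (Quotient.mk Λ.compSetoid (Λ.cod a)).out (Λ.cod a) :=
        Quotient.exact hout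
      have := Λ.diff_mem_bdries' hrel
      rw [← haeq] at this
      simpa using this
    | zero =>
      have : (⟨0, hx⟩ : Λ.cycles 0) = 0 := rfl
      rw [this, map_zero, map_zero]
      rfl
    | add x y hxs hys ihx ihy =>
      have hxc : x ∈ Λ.cycles 0 := by
        rw [Λ.cycles_zero_eq, CS, Finsupp.supported_eq_span_single]; exact hxs
      have hyc : y ∈ Λ.cycles 0 := by
        rw [Λ.cycles_zero_eq, CS, Finsupp.supported_eq_span_single]; exact hys
      have : (⟨x + y, hx⟩ : Λ.cycles 0) = ⟨x, hxc⟩ + ⟨y, hyc⟩ := rfl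
      rw [map_add, map_add, ihx hxc, ihy hyc, this, Submodule.Quotient.mk_add]
    | smul c x hxs ihx =>
      have hxc : x ∈ Λ.cycles 0 := by
        rw [Λ.cycles_zero_eq, CS, Finsupp.supported_eq_span_single]; exact hxs
      have : (⟨c • x, hx⟩ : Λ.cycles 0) = c • ⟨x, hxc⟩ := rfl
      rw [map_smul, map_smul, ihx hxc, this, Submodule.Quotient.mk_smul]
  have hψφ : ∀ z : Λ.H 0, ψ (φ z) = z := by
    intro z
    obtain ⟨x, rfl⟩ := Submodule.Quotient.mk_surjective _ z
    rw [hφ_mk, key x.1 x.2]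
  have hφψ : ∀ y : Quotient Λ.compSetoid →₀ ℤ, φ (ψ y) = y := by
    have : φ.comp ψ = LinearMap.id := by
      refine Finsupp.lhom_ext fun q c => ?_
      have hc : Finsupp.single q c = c • Finsupp.single q 1 := by simp
      rw [LinearMap.comp_apply, LinearMap.id_apply, hc, map_smul, map_smul,
        hψ_single, hφ_mk, Λ.compMap_single, Λ.cod_idm, one_smul, Quotient.out_eq]
    intro y
    have := congrArg (fun f => f y) this
    simpa using this
  have e0 : Λ.H 0 ≃ₗ[ℤ] (Quotient Λ.compSetoid →₀ ℤ) :=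
    LinearEquiv.ofLinear φ ψ (LinearMap.ext fun y => hφψ y) (LinearMap.ext fun z => hψφ z)
  refine ⟨⟨e0⟩, ?_, ?_⟩
  · intro p hp hcard
    have hfin : Finite (Quotient Λ.compSetoid) :=
      (Nat.card_pos_iff.mp (hcard ▸ hp)).2
    let e : Quotient Λ.compSetoid ≃ Fin p := Finite.equivFinOfCardEq hcard
    exact ⟨e0.trans ((Finsupp.domLCongr e).trans
      (Finsupp.linearEquivFunOnFinite ℤ ℤ (Fin p)))⟩
  · constructor
    · intro hconn
      obtain ⟨o⟩ := Λ.nonempty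
      have hsub : Subsingleton (Quotient Λ.compSetoid) := by
        constructor
        intro a b
        induction a using Quotient.inductionOn with | h u =>
        induction b using Quotient.inductionOn with | h v =>
        exact Quotient.sound (hconn u v)
      have : Unique (Quotient Λ.compSetoid) :=
        uniqueOfSubsingleton (Quotient.mk Λ.compSetoid o)
      exact ⟨e0.trans (Finsupp.LinearEquiv.finsuppUnique ℤ ℤ (Quotient Λ.compSetoid))⟩
    · rintro ⟨e1⟩
      intro u v
      have e : (Quotient Λ.compSetoid →₀ ℤ) ≃ₗ[ℤ] ℤ := e0.symm.trans e1
      by_contra hne'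
      have hne : Quotient.mk Λ.compSetoid u ≠ Quotient.mk Λ.compSetoid v := by
        intro h
        exact hne' (Quotient.exact h)
      set qu := Quotient.mk Λ.compSetoid u
      set qv := Quotient.mk Λ.compSetoid v
      set a := e (Finsupp.single qu 1) with haeq
      set b := e (Finsupp.single qv 1) with hbeq
      have hb : b ≠ 0 := by
        intro h
        have : Finsupp.single qv (1 : ℤ) = 0 := by
          have := e.map_eq_zero_iff.mp (hbeq ▸ h)
          exact this
        exact one_ne_zero (Finsupp.single_eq_zero.mp this)
      have hzero : b • Finsupp.single qu (1 : ℤ) - a • Finsupp.single qv 1 = 0 := by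
        apply e.map_eq_zero_iff.mp
        rw [map_sub, map_smul, map_smul, ← haeq, ← hbeq, smul_eq_mul, smul_eq_mul,
          mul_comm, sub_self]
      have := congrArg (fun g : Quotient Λ.compSetoid →₀ ℤ => g qu) hzero
      simp only [Finsupp.sub_apply, Finsupp.smul_apply, Finsupp.single_eq_same,
        Finsupp.single_eq_of_ne' (Ne.symm hne), smul_eq_mul, mul_one, mul_zero,
        sub_zero, Finsupp.coe_zero, Pi.zero_apply] at this
      exact hb this
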